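/- Deterministically (for any data X ∈ ℝ^{n×p}, Y ∈ ℝ^{n×T} and any λ ≥ 0, τ ≥ 0), the matrix N = (I_T ⊗ X) M† (I_T ⊗ Xᵀ) ∈ ℝ^{nT×nT} built from the multi-task elastic-net solution satisfies ‖N‖_op ≤ 1. -/

import Mathlib

open MeasureTheory ProbabilityTheory Matrix Filter
open scoped BigOperators Kronecker NNReal ENNReal

noncomputable section

namespace MTS

instance matMeasurableSpace {a b : Type*} : MeasurableSpace (Matrix a b ℝ) :=
  inferInstanceAs (MeasurableSpace (a → b → ℝ))

instance matNormedAddCommGroup {a b : Type*} [Fintype a] [Fintype b] :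
    NormedAddCommGroup (Matrix a b ℝ) :=
  inferInstanceAs (NormedAddCommGroup (a → b → ℝ))

instance matNormedSpace {a b : Type*} [Fintype a] [Fintype b] :
    NormedSpace ℝ (Matrix a b ℝ) :=
  inferInstanceAs (NormedSpace ℝ (a → b → ℝ))

instance matMeasureSpace {a b : Type*} [Fintype a] [Fintype b] :
    MeasureSpace (Matrix a b ℝ) :=
  inferInstanceAs (MeasureSpace (a → b → ℝ))

/-- Squared Frobenius norm of a matrix. -/
def frobSq {a b : Type*} [Fintype a] [Fintype b] (A : Matrix a b ℝ) : ℝ :=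
  ∑ i, ∑ j, A i j ^ 2

/-- Frobenius norm of a matrix. -/
def frob {a b : Type*} [Fintype a] [Fintype b] (A : Matrix a b ℝ) : ℝ :=
  Real.sqrt (frobSq A)

/-- ℓ2-operator norm of a matrix. -/
def opNorm {a b : Type*} [Fintype a] [Fintype b] [DecidableEq b] (A : Matrix a b ℝ) : ℝ :=
  ‖LinearMap.toContinuousLinearMap (Matrix.toEuclideanLin A)‖

open Classical in
def matSqrt {p : ℕ} (A : Matrix (Fin p) (Fin p) ℝ) : Matrix (Fin p) (Fin p) ℝ :=
  if h : A.PosSemidef then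
    (h.1.eigenvectorUnitary : Matrix (Fin p) (Fin p) ℝ) *
      Matrix.diagonal (fun i => Real.sqrt (h.1.eigenvalues i)) *
      (star h.1.eigenvectorUnitary : Matrix (Fin p) (Fin p) ℝ)
  else 0

/-- Nuclear norm of a square matrix. -/
def nucNorm {T : ℕ} (A : Matrix (Fin T) (Fin T) ℝ) : ℝ :=
  (matSqrt (Aᵀ * A)).trace

open Classical in
def pinv {N : Type*} [Fintype N] [DecidableEq N] (M : Matrix N N ℝ) : Matrix N N ℝ :=
  if h : ∃ G : Matrix N N ℝ,
      M * G * M = M ∧ G * M * G = G ∧ (M * G)ᵀ = M * G ∧ (G * M)ᵀ = G * M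
  then h.choose else 0

/-- The ℓ_{2,1} norm of a matrix: sum of the Euclidean norms of its rows. -/
def norm21 {p T : ℕ} (B : Matrix (Fin p) (Fin T) ℝ) : ℝ :=
  ∑ j, Real.sqrt (∑ t, B j t ^ 2)

/-- The multi-task elastic-net objective function. -/
def objective {p T : ℕ} (n : ℕ) (lam tau : ℝ) (Y : Matrix (Fin n) (Fin T) ℝ)
    (X : Matrix (Fin n) (Fin p) ℝ) (B : Matrix (Fin p) (Fin T) ℝ) : ℝ :=
  (1 / (2 * (n : ℝ))) * frobSq (Y - X * B) + lam * norm21 B + (tau / 2) * frobSq B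

open Classical in
def nnzRows {p T : ℕ} (B : Matrix (Fin p) (Fin T) ℝ) : ℕ :=
  (Finset.univ.filter fun j => B j ≠ 0).card

open Classical in
def nnzVec {p : ℕ} (b : Fin p → ℝ) : ℕ :=
  (Finset.univ.filter fun j => b j ≠ 0).card

open Classical in
def rowHess {T : ℕ} (lam : ℝ) (r : Fin T → ℝ) : Matrix (Fin T) (Fin T) ℝ :=
  if r = 0 then 0
  else (lam * (Real.sqrt (∑ t, r t ^ 2))⁻¹) •
    ((1 : Matrix (Fin T) (Fin T) ℝ) - (∑ t, r t ^ 2)⁻¹ • Matrix.vecMulVec r r)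

open Classical in
def Psupp {p T : ℕ} (B : Matrix (Fin p) (Fin T) ℝ) : Matrix (Fin p) (Fin p) ℝ :=
  Matrix.of fun j k => if j = k ∧ B j ≠ 0 then (1 : ℝ) else 0

open Classical in
def Xsupp {n p T : ℕ} (X : Matrix (Fin n) (Fin p) ℝ) (B : Matrix (Fin p) (Fin T) ℝ) :
    Matrix (Fin n) (Fin p) ℝ :=
  Matrix.of fun i j => if B j ≠ 0 then X i j else 0

/-- The matrix `M = I_T ⊗ (X_ŜᵀX_Ŝ + τ n P_Ŝ) + n Σ_{k ∈ Ŝ} (H^{(k)} ⊗ e_k e_kᵀ)`. -/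
def Mmat {p T : ℕ} (n : ℕ) (lam tau : ℝ) (X : Matrix (Fin n) (Fin p) ℝ)
    (B : Matrix (Fin p) (Fin T) ℝ) : Matrix (Fin T × Fin p) (Fin T × Fin p) ℝ :=
  (1 : Matrix (Fin T) (Fin T) ℝ) ⊗ₖ ((Xsupp X B)ᵀ * Xsupp X B + (tau * n) • Psupp B)
    + (n : ℝ) • ∑ k : Fin p, (rowHess lam (B k)) ⊗ₖ (Matrix.single k k (1 : ℝ))

/-- The interaction matrix `Â = Σ_i (I_T ⊗ e_iᵀX) M† (I_T ⊗ Xᵀe_i)`, written entrywise: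
`Â_{t,t'} = Σ_i Σ_j Σ_j' X_{ij} (M†)_{(t,j),(t',j')} X_{ij'}`. -/
def Amat {p T : ℕ} (n : ℕ) (lam tau : ℝ) (X : Matrix (Fin n) (Fin p) ℝ)
    (B : Matrix (Fin p) (Fin T) ℝ) : Matrix (Fin T) (Fin T) ℝ :=
  Matrix.of fun t t' => ∑ i : Fin n, ∑ j : Fin p, ∑ j' : Fin p,
    X i j * pinv (Mmat n lam tau X B) (t, j) (t', j') * X i j'

/-- The proposed noise covariance estimator `Ŝ`. -/
def Scov {p T : ℕ} (n : ℕ) (lam tau : ℝ) (Sig : Matrix (Fin p) (Fin p) ℝ)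
    (X : Matrix (Fin n) (Fin p) ℝ) (Y : Matrix (Fin n) (Fin T) ℝ)
    (B : Matrix (Fin p) (Fin T) ℝ) : Matrix (Fin T) (Fin T) ℝ :=
  ((n : ℝ) • (1 : Matrix (Fin T) (Fin T) ℝ) - Amat n lam tau X B)⁻¹ *
    ((Y - X * B)ᵀ * ((((p : ℝ) + (n : ℝ)) • (1 : Matrix (Fin n) (Fin n) ℝ))
        - X * Sig⁻¹ * Xᵀ) * (Y - X * B)
      - Amat n lam tau X B * ((Y - X * B)ᵀ * (Y - X * B))
      - ((Y - X * B)ᵀ * (Y - X * B)) * Amat n lam tau X B) *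
    ((n : ℝ) • (1 : Matrix (Fin T) (Fin T) ℝ) - Amat n lam tau X B)⁻¹

/-- A random vector is centered Gaussian with covariance `S`: every linear functional of it
is a centered real Gaussian with the corresponding variance. -/
def IsGaussianVec {Ω : Type*} [MeasurableSpace Ω] (P : Measure Ω) {T : ℕ}
    (v : Ω → Fin T → ℝ) (S : Matrix (Fin T) (Fin T) ℝ) : Prop :=
  ∀ a : Fin T → ℝ,
    Measure.map (fun ω => ∑ t, a t * v ω t) P =
      gaussianReal 0 (Real.toNNReal (a ⬝ᵥ S.mulVec a))

/-- The rows of the random matrix `M` are i.i.d. centered Gaussian vectors with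
covariance `S`. -/
def IIDGaussianRows {Ω : Type*} [MeasurableSpace Ω] (P : Measure Ω) {n T : ℕ}
    (M : Ω → Matrix (Fin n) (Fin T) ℝ) (S : Matrix (Fin T) (Fin T) ℝ) : Prop :=
  (∀ i j, Measurable fun ω => M ω i j) ∧
    iIndepFun (fun i ω => M ω i) P ∧
    ∀ i, IsGaussianVec P (fun ω => M ω i) S

/-- All the assumptions of the multi-task linear model with multi-task elastic-net
estimator `Bhat`. -/
structure ModelHyps {n p T : ℕ} {Ω : Type*} [MeasurableSpace Ω] (P : Measure Ω)
    (Sig : Matrix (Fin p) (Fin p) ℝ) (S : Matrix (Fin T) (Fin T) ℝ)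
    (Bstar : Matrix (Fin p) (Fin T) ℝ)
    (X : Ω → Matrix (Fin n) (Fin p) ℝ) (E : Ω → Matrix (Fin n) (Fin T) ℝ)
    (lam tau : ℝ) (Bhat : Ω → Matrix (Fin p) (Fin T) ℝ) : Prop where
  prob : IsProbabilityMeasure P
  hn : 0 < n
  hp : 0 < p
  hT : 0 < T
  hSig : Sig.PosDef
  hS : S.PosSemidef
  hX : IIDGaussianRows P X Sig
  hE : IIDGaussianRows P E S
  indep : IndepFun X E P
  hlam : 0 ≤ lam
  htau : 0 ≤ tau
  hBhat_meas : Measurable Bhat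
  hBhat_min : ∀ ω B, objective n lam tau (X ω * Bstar + E ω) (X ω) (Bhat ω)
      ≤ objective n lam tau (X ω * Bstar + E ω) (X ω) B

/-- The event `U₁` that `B̂` has at most `n(1-c)/2` nonzero rows. -/
def U1set {p T : ℕ} {Ω : Type*} (Bhat : Ω → Matrix (Fin p) (Fin T) ℝ) (n : ℕ) (c : ℝ) :
    Set Ω :=
  {ω | (nnzRows (Bhat ω) : ℝ) ≤ (n : ℝ) * (1 - c) / 2}

/-- Smallest eigenvalue of a symmetric matrix (junk value `0` otherwise). -/
def eigMin {p : ℕ} (A : Matrix (Fin p) (Fin p) ℝ) : ℝ :=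
  if h : A.IsHermitian then ⨅ i, h.eigenvalues i else 0


/-- Residual matrix `F = Y - XB` with `Y = XB* + E`. -/
def resid {n p T : ℕ} (Bstar : Matrix (Fin p) (Fin T) ℝ) (X : Matrix (Fin n) (Fin p) ℝ)
    (E : Matrix (Fin n) (Fin T) ℝ) (B : Matrix (Fin p) (Fin T) ℝ) :
    Matrix (Fin n) (Fin T) ℝ :=
  X * Bstar + E - X * B

/-- Error matrix `H = Σ^{1/2}(B - B*)`. -/
def herr {p T : ℕ} (Sig : Matrix (Fin p) (Fin p) ℝ) (Bstar B : Matrix (Fin p) (Fin T) ℝ) :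
    Matrix (Fin p) (Fin T) ℝ :=
  matSqrt Sig * (B - Bstar)

/-- The matrix `I_T - Â/n`. -/
def ImA {p T : ℕ} (n : ℕ) (lam tau : ℝ) (X : Matrix (Fin n) (Fin p) ℝ)
    (B : Matrix (Fin p) (Fin T) ℝ) : Matrix (Fin T) (Fin T) ℝ :=
  (1 : Matrix (Fin T) (Fin T) ℝ) - (n : ℝ)⁻¹ • Amat n lam tau X B

/-- Residual as a function of `Z`, where `X = ZΣ^{1/2}` and `Y = XB* + E`. -/
def Fz {n p T : ℕ} (Sig : Matrix (Fin p) (Fin p) ℝ) (Bstar : Matrix (Fin p) (Fin T) ℝ)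
    (E : Matrix (Fin n) (Fin T) ℝ) (Z : Matrix (Fin n) (Fin p) ℝ)
    (B : Matrix (Fin p) (Fin T) ℝ) : Matrix (Fin n) (Fin T) ℝ :=
  Z * matSqrt Sig * Bstar + E - Z * matSqrt Sig * B

/-- `D(Z) = (‖H(Z)‖_F² + ‖F(Z)‖_F²/n)^{1/2}`. -/
def Dz {n p T : ℕ} (Sig : Matrix (Fin p) (Fin p) ℝ) (Bstar : Matrix (Fin p) (Fin T) ℝ)
    (E : Matrix (Fin n) (Fin T) ℝ) (Z : Matrix (Fin n) (Fin p) ℝ)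
    (B : Matrix (Fin p) (Fin T) ℝ) : ℝ :=
  Real.sqrt (frob (herr Sig Bstar B) ^ 2 + frob (Fz Sig Bstar E Z B) ^ 2 / (n : ℝ))

/-- The distribution of an `n × p` random matrix with i.i.d. standard Gaussian entries. -/
def stdGaussMat (n p : ℕ) : Measure (Matrix (Fin n) (Fin p) ℝ) :=
  Measure.pi fun _ : Fin n => Measure.pi fun _ : Fin p => gaussianReal 0 1

/-- The method-of-moments estimator of the noise covariance. -/
def SmmEst {T : ℕ} (n p : ℕ) (Sig : Matrix (Fin p) (Fin p) ℝ)
    (X : Matrix (Fin n) (Fin p) ℝ) (Y : Matrix (Fin n) (Fin T) ℝ) :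
    Matrix (Fin T) (Fin T) ℝ :=
  (((n : ℝ) + 1 + (p : ℝ)) / ((n : ℝ) * ((n : ℝ) + 1))) • (Yᵀ * Y)
    - (1 / ((n : ℝ) * ((n : ℝ) + 1))) • (Yᵀ * X * Sig⁻¹ * Xᵀ * Y)


/-! ### Auxiliary lemmas for statement 11 -/

section Aux11

open Classical

-- dot-product juggling
lemma dpJuggle {m k : Type*} [Fintype m] [Fintype k] (G : Matrix m k ℝ) (y : k → ℝ)
    (w : m → ℝ) : (G *ᵥ y) ⬝ᵥ w = y ⬝ᵥ (Gᵀ *ᵥ w) := by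
  rw [Matrix.dotProduct_mulVec, Matrix.vecMul_transpose]

lemma dpSelfNonneg {m : Type*} [Fintype m] (x : m → ℝ) : 0 ≤ x ⬝ᵥ x :=
  Finset.sum_nonneg fun i _ => mul_self_nonneg _

lemma quadTransposeMul {m k : Type*} [Fintype m] [Fintype k] (A : Matrix m k ℝ)
    (u : k → ℝ) : u ⬝ᵥ ((Aᵀ * A) *ᵥ u) = (A *ᵥ u) ⬝ᵥ (A *ᵥ u) := by
  rw [← Matrix.mulVec_mulVec, ← dpJuggle]

-- Moore-Penrose pseudoinverse uniqueness and symmetry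
lemma mpUnique {N : Type*} [Fintype N] [DecidableEq N] {M G1 G2 : Matrix N N ℝ}
    (h11 : M * G1 * M = M) (h12 : G1 * M * G1 = G1)
    (h13 : (M * G1)ᵀ = M * G1) (h14 : (G1 * M)ᵀ = G1 * M)
    (h21 : M * G2 * M = M) (h22 : G2 * M * G2 = G2)
    (h23 : (M * G2)ᵀ = M * G2) (h24 : (G2 * M)ᵀ = G2 * M) : G1 = G2 := by
  have e1 : M * G1 = M * G2 := by
    calc M * G1 = (M * G2) * (M * G1) := by
          rw [show (M * G2) * (M * G1) = (M * G2 * M) * G1 by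
            simp only [Matrix.mul_assoc], h21]
      _ = ((M * G1) * (M * G2))ᵀ := by rw [Matrix.transpose_mul, h23, h13]
      _ = (M * G2)ᵀ := by rw [show (M * G1) * (M * G2) = (M * G1 * M) * G2 by
            simp only [Matrix.mul_assoc], h11]
      _ = M * G2 := h23
  have e2 : G1 * M = G2 * M := by
    calc G1 * M = (G1 * M) * (G2 * M) := by
          rw [show (G1 * M) * (G2 * M) = G1 * (M * G2 * M) by
            simp only [Matrix.mul_assoc], h21]
      _ = ((G2 * M) * (G1 * M))ᵀ := by rw [Matrix.transpose_mul, h14, h24]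
      _ = (G2 * M)ᵀ := by rw [show (G2 * M) * (G1 * M) = G2 * (M * G1 * M) by
            simp only [Matrix.mul_assoc], h11]
      _ = G2 * M := h24
  calc G1 = G1 * M * G1 := h12.symm
    _ = G1 * (M * G2) := by rw [Matrix.mul_assoc, e1]
    _ = (G1 * M) * G2 := by rw [Matrix.mul_assoc]
    _ = G2 * M * G2 := by rw [e2]
    _ = G2 := h22

lemma mpSymm {N : Type*} [Fintype N] [DecidableEq N] {M G : Matrix N N ℝ} (hM : Mᵀ = M)
    (h1 : M * G * M = M) (h2 : G * M * G = G) (h3 : (M * G)ᵀ = M * G)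
    (h4 : (G * M)ᵀ = G * M) : Gᵀ = G := by
  have t1 : M * Gᵀ * M = M := by
    have : M * Gᵀ * M = (M * G * M)ᵀ := by
      rw [Matrix.transpose_mul, Matrix.transpose_mul, hM]
      simp only [Matrix.mul_assoc]
    rw [this, h1, hM]
  have t2 : Gᵀ * M * Gᵀ = Gᵀ := by
    have : Gᵀ * M * Gᵀ = (G * M * G)ᵀ := by
      rw [Matrix.transpose_mul, Matrix.transpose_mul, hM]
      simp only [Matrix.mul_assoc]
    rw [this, h2]
  have key : M * Gᵀ = G * M := by
    conv_lhs => rw [← hM, ← Matrix.transpose_mul]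
    exact h4
  have key2 : Gᵀ * M = M * G := by
    conv_lhs => rw [← hM, ← Matrix.transpose_mul]
    exact h3
  have t3 : (M * Gᵀ)ᵀ = M * Gᵀ := by rw [key, h4]
  have t4 : (Gᵀ * M)ᵀ = Gᵀ * M := by rw [key2, h3]
  exact mpUnique t1 t2 t3 t4 h1 h2 h3 h4

variable {n p T : ℕ}

lemma Psupp_transpose (B : Matrix (Fin p) (Fin T) ℝ) : (Psupp B)ᵀ = Psupp B := by
  ext j k
  simp only [Matrix.transpose_apply, Psupp, Matrix.of_apply]
  by_cases h : j = k
  · subst h; rfl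
  · rw [if_neg (fun hc => h hc.1.symm), if_neg (fun hc => h hc.1)]

lemma Psupp_mul_Psupp (B : Matrix (Fin p) (Fin T) ℝ) : Psupp B * Psupp B = Psupp B := by
  ext j k
  rw [Matrix.mul_apply, Finset.sum_eq_single j]
  · simp only [Psupp, Matrix.of_apply]
    by_cases h : B j = 0
    · rw [if_neg (fun hc => hc.2 h), if_neg (fun hc => hc.2 h), zero_mul]
    · rw [if_pos ⟨by simp, h⟩, one_mul]
  · intro b _ hb
    simp only [Psupp, Matrix.of_apply]
    rw [if_neg (fun hc => hb hc.1.symm), zero_mul]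
  · intro h; exact absurd (Finset.mem_univ j) h

lemma Xmul_Psupp (X : Matrix (Fin n) (Fin p) ℝ) (B : Matrix (Fin p) (Fin T) ℝ) :
    X * Psupp B = Xsupp X B := by
  ext i j
  rw [Matrix.mul_apply, Finset.sum_eq_single j]
  · simp only [Psupp, Xsupp, Matrix.of_apply]
    by_cases h : B j = 0
    · rw [if_neg (fun hc => hc.2 h), if_neg (fun hc => hc h), mul_zero]
    · rw [if_pos ⟨by simp, h⟩, if_pos h, mul_one]
  · intro b _ hb
    simp only [Psupp, Matrix.of_apply]
    rw [if_neg (fun hc => hb hc.1), mul_zero]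
  · intro h; exact absurd (Finset.mem_univ j) h

lemma rowHess_zero (lam : ℝ) : rowHess lam (0 : Fin T → ℝ) = 0 := by
  simp [rowHess]

lemma rowHess_transpose (lam : ℝ) (r : Fin T → ℝ) : (rowHess lam r)ᵀ = rowHess lam r := by
  unfold rowHess
  split_ifs with h
  · simp
  · rw [Matrix.transpose_smul, Matrix.transpose_sub, Matrix.transpose_one,
      Matrix.transpose_smul]
    congr 2
    ext a b
    simp [Matrix.vecMulVec_apply, mul_comm]

lemma rowHess_quad_nonneg {lam : ℝ} (hlam : 0 ≤ lam) (r w : Fin T → ℝ) :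
    0 ≤ w ⬝ᵥ ((rowHess lam r) *ᵥ w) := by
  unfold rowHess
  split_ifs with h
  · simp
  · have hs : 0 < ∑ t, r t ^ 2 := by
      have hex : ∃ t, r t ≠ 0 := by
        by_contra hc; push_neg at hc; exact h (funext hc)
      obtain ⟨t0, ht0⟩ := hex
      exact Finset.sum_pos' (fun i _ => sq_nonneg _)
        ⟨t0, Finset.mem_univ _, by positivity⟩
    rw [Matrix.smul_mulVec, dotProduct_smul]
    refine mul_nonneg (by positivity) ?_
    rw [Matrix.sub_mulVec, dotProduct_sub, Matrix.one_mulVec,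
      Matrix.smul_mulVec, dotProduct_smul, sub_nonneg, smul_eq_mul]
    have hvv : w ⬝ᵥ (Matrix.vecMulVec r r *ᵥ w) = (∑ t, r t * w t) ^ 2 := by
      simp only [dotProduct, Matrix.mulVec, Matrix.vecMulVec_apply, sq]
      rw [Finset.sum_mul]
      refine Finset.sum_congr rfl fun t _ => ?_
      rw [Finset.mul_sum, Finset.mul_sum]
      refine Finset.sum_congr rfl fun t' _ => ?_
      ring
    rw [hvv]
    have hcs := Finset.sum_mul_sq_le_sq_mul_sq Finset.univ r w
    have hww : w ⬝ᵥ w = ∑ i, w i ^ 2 := by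
      simp [dotProduct, sq]
    rw [hww]
    calc (∑ t, r t ^ 2)⁻¹ * (∑ t, r t * w t) ^ 2
        ≤ (∑ t, r t ^ 2)⁻¹ * ((∑ t, r t ^ 2) * ∑ t, w t ^ 2) :=
          mul_le_mul_of_nonneg_left hcs (inv_nonneg.mpr hs.le)
      _ = ∑ t, w t ^ 2 := by
          rw [← mul_assoc, inv_mul_cancel₀ hs.ne', one_mul]

end Aux11

section Aux11b

open Classical

variable {n p T : ℕ} (lam tau : ℝ) (X : Matrix (Fin n) (Fin p) ℝ)
  (B : Matrix (Fin p) (Fin T) ℝ)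

lemma std_transpose (k : Fin p) :
    (Matrix.single k k (1:ℝ))ᵀ = Matrix.single k k 1 := by
  ext a b
  simp [Matrix.transpose_apply, Matrix.single, and_comm]

lemma kron_std_quad (H : Matrix (Fin T) (Fin T) ℝ) (k : Fin p) (v : Fin T × Fin p → ℝ) :
    v ⬝ᵥ ((H ⊗ₖ Matrix.single k k (1:ℝ)) *ᵥ v)
      = (fun t => v (t,k)) ⬝ᵥ (H *ᵥ fun t => v (t,k)) := by
  simp only [dotProduct, Matrix.mulVec, Matrix.kroneckerMap_apply,
    Matrix.single, Matrix.of_apply, Fintype.sum_prod_type]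
  simp [Finset.mul_sum, mul_ite, ite_mul, ite_and, Finset.sum_ite_eq]

lemma sum_mulVec' {m ι : Type*} [Fintype m] [Fintype ι] (A : ι → Matrix m m ℝ)
    (v : m → ℝ) : (∑ i, A i) *ᵥ v = ∑ i, (A i *ᵥ v) := by
  ext j
  simp only [Matrix.mulVec, dotProduct, Finset.sum_apply, Matrix.sum_apply,
    Finset.sum_mul]
  rw [Finset.sum_comm]

lemma dp_sum' {m ι : Type*} [Fintype m] [Fintype ι] (v : m → ℝ) (w : ι → m → ℝ) :
    v ⬝ᵥ (∑ i, w i) = ∑ i, v ⬝ᵥ w i := by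
  simp only [dotProduct, Finset.sum_apply, Finset.mul_sum]
  rw [Finset.sum_comm]

lemma Mmat_entry_zero {j' : Fin p} (hj' : B j' = 0) (t : Fin T) (j : Fin p) (t' : Fin T) :
    Mmat n lam tau X B (t, j) (t', j') = 0 := by
  simp only [Mmat, Matrix.add_apply, Matrix.kroneckerMap_apply, Matrix.smul_apply,
    Matrix.sum_apply, smul_eq_mul]
  have hA : ((Xsupp X B)ᵀ * Xsupp X B) j j' = 0 := by
    rw [Matrix.mul_apply]
    refine Finset.sum_eq_zero fun i _ => ?_
    simp [Xsupp, hj']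
  have hP : Psupp B j j' = 0 := by
    simp only [Psupp, Matrix.of_apply]
    rw [if_neg (fun hc : j = j' ∧ B j ≠ 0 => hc.2 (by rw [hc.1]; exact hj'))]
  have hS : ∀ k ∈ (Finset.univ : Finset (Fin p)),
      rowHess lam (B k) t t' * Matrix.single k k (1:ℝ) j j' = 0 := by
    intro k _
    by_cases hk : k = j'
    · subst hk; rw [hj', rowHess_zero]; simp
    · simp only [Matrix.single, Matrix.of_apply]
      rw [if_neg (fun hc => hk hc.2), mul_zero]
  rw [hA, hP, Finset.sum_eq_zero hS]
  ring

lemma Mmat_transpose : (Mmat n lam tau X B)ᵀ = Mmat n lam tau X B := by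
  unfold Mmat
  rw [Matrix.transpose_add]
  congr 1
  · rw [← Matrix.kroneckerMap_transpose, Matrix.transpose_one]
    congr 1
    rw [Matrix.transpose_add, Matrix.transpose_mul, Matrix.transpose_transpose,
      Matrix.transpose_smul, Psupp_transpose]
  · rw [Matrix.transpose_smul, Matrix.transpose_sum]
    congr 1
    refine Finset.sum_congr rfl fun k _ => ?_
    rw [← Matrix.kroneckerMap_transpose, rowHess_transpose, std_transpose]

lemma Mmat_mul_P :
    Mmat n lam tau X B * ((1 : Matrix (Fin T) (Fin T) ℝ) ⊗ₖ Psupp B)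
      = Mmat n lam tau X B := by
  ext a b
  obtain ⟨t, j⟩ := a; obtain ⟨t', j'⟩ := b
  rw [Matrix.mul_apply, Finset.sum_eq_single (t', j')]
  · simp only [Matrix.kroneckerMap_apply, Matrix.one_apply_eq, one_mul]
    by_cases h : B j' = 0
    · simp [Psupp, h, Mmat_entry_zero lam tau X B h]
    · simp [Psupp, h]
  · intro c _ hc
    obtain ⟨s, l⟩ := c
    simp only [Matrix.kroneckerMap_apply]
    by_cases hs : s = t'
    · subst hs
      have hl : l ≠ j' := fun hh => hc (by subst hh; rfl)
      simp only [Psupp, Matrix.of_apply]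
      rw [if_neg (fun hcc : l = j' ∧ B l ≠ 0 => hl hcc.1), mul_zero, mul_zero]
    · rw [Matrix.one_apply_ne hs, zero_mul, mul_zero]
  · intro h; exact absurd (Finset.mem_univ _) h

lemma oneKronT {a b : ℕ} (Y : Matrix (Fin a) (Fin b) ℝ) :
    ((1 : Matrix (Fin T) (Fin T) ℝ) ⊗ₖ Y)ᵀ = (1 : Matrix (Fin T) (Fin T) ℝ) ⊗ₖ Yᵀ := by
  rw [← Matrix.kroneckerMap_transpose, Matrix.transpose_one]

lemma oneKronX_mul_P :
    ((1 : Matrix (Fin T) (Fin T) ℝ) ⊗ₖ X) * ((1 : Matrix (Fin T) (Fin T) ℝ) ⊗ₖ Psupp B) = (1 : Matrix (Fin T) (Fin T) ℝ) ⊗ₖ Xsupp X B := by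
  rw [← Matrix.mul_kronecker_mul, Matrix.one_mul, Xmul_Psupp]

lemma Mmat_quad_ge (hlam : 0 ≤ lam) (htau : 0 ≤ tau) (v : Fin T × Fin p → ℝ) :
    v ⬝ᵥ (((1 : Matrix (Fin T) (Fin T) ℝ) ⊗ₖ ((Xsupp X B)ᵀ * Xsupp X B)) *ᵥ v)
      ≤ v ⬝ᵥ (Mmat n lam tau X B *ᵥ v) := by
  have hsplit : Mmat n lam tau X B
      = ((1 : Matrix (Fin T) (Fin T) ℝ) ⊗ₖ ((Xsupp X B)ᵀ * Xsupp X B))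
        + (((1 : Matrix (Fin T) (Fin T) ℝ) ⊗ₖ ((tau * (n:ℝ)) • Psupp B))
          + (n:ℝ) • ∑ k, rowHess lam (B k) ⊗ₖ Matrix.single k k (1:ℝ)) := by
    unfold Mmat
    rw [Matrix.kronecker_add, add_assoc]
  rw [hsplit, Matrix.add_mulVec, dotProduct_add]
  refine le_add_of_nonneg_right ?_
  rw [Matrix.add_mulVec, dotProduct_add]
  have h2 : 0 ≤ v ⬝ᵥ (((1 : Matrix (Fin T) (Fin T) ℝ) ⊗ₖ ((tau * (n:ℝ)) • Psupp B)) *ᵥ v) := by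
    rw [Matrix.kronecker_smul, Matrix.smul_mulVec, dotProduct_smul,
      smul_eq_mul]
    refine mul_nonneg (mul_nonneg htau (Nat.cast_nonneg n)) ?_
    have hPP : ((1 : Matrix (Fin T) (Fin T) ℝ) ⊗ₖ Psupp B)
        = ((1 : Matrix (Fin T) (Fin T) ℝ) ⊗ₖ Psupp B)ᵀ
          * ((1 : Matrix (Fin T) (Fin T) ℝ) ⊗ₖ Psupp B) := by
      rw [oneKronT, Psupp_transpose, ← Matrix.mul_kronecker_mul, Matrix.one_mul,
        Psupp_mul_Psupp]
    rw [hPP, quadTransposeMul]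
    exact dpSelfNonneg _
  have h3 : 0 ≤ v ⬝ᵥ (((n:ℝ) • ∑ k, rowHess lam (B k) ⊗ₖ Matrix.single k k (1:ℝ)) *ᵥ v) := by
    rw [Matrix.smul_mulVec, dotProduct_smul, smul_eq_mul]
    refine mul_nonneg (Nat.cast_nonneg n) ?_
    rw [sum_mulVec', dp_sum']
    refine Finset.sum_nonneg fun k _ => ?_
    rw [kron_std_quad]
    exact rowHess_quad_nonneg hlam _ _
  linarith

end Aux11b

/-- Lemma: `‖N‖_op ≤ 1` for `N = (I_T ⊗ X) M† (I_T ⊗ Xᵀ)`. -/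
theorem statement_11 (n p T : ℕ)
    (X : Matrix (Fin n) (Fin p) ℝ) (Y : Matrix (Fin n) (Fin T) ℝ)
    (lam tau : ℝ) (hlam : 0 ≤ lam) (htau : 0 ≤ tau)
    (Bhat : Matrix (Fin p) (Fin T) ℝ)
    (hmin : ∀ B, objective n lam tau Y X Bhat ≤ objective n lam tau Y X B) :
    opNorm (((1 : Matrix (Fin T) (Fin T) ℝ) ⊗ₖ X) * pinv (Mmat n lam tau X Bhat) *
        ((1 : Matrix (Fin T) (Fin T) ℝ) ⊗ₖ Xᵀ)) ≤ 1 := by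
  classical
  set M := Mmat n lam tau X Bhat with hMdef
  by_cases hex : ∃ G : Matrix (Fin T × Fin p) (Fin T × Fin p) ℝ,
      M * G * M = M ∧ G * M * G = G ∧ (M * G)ᵀ = M * G ∧ (G * M)ᵀ = G * M
  · obtain ⟨hg1, hg2, hg3, hg4⟩ := hex.choose_spec
    have hGdef : pinv M = hex.choose := by
      unfold pinv
      rw [dif_pos hex]
    set G := hex.choose with hG
    set A := (1 : Matrix (Fin T) (Fin T) ℝ) ⊗ₖ Xsupp X Bhat with hA
    set P := (1 : Matrix (Fin T) (Fin T) ℝ) ⊗ₖ Psupp Bhat with hP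
    have hMt : Mᵀ = M := Mmat_transpose lam tau X Bhat
    have hGt : Gᵀ = G := mpSymm hMt hg1 hg2 hg3 hg4
    have hMP : M * P = M := Mmat_mul_P lam tau X Bhat
    have hPt : Pᵀ = P := by rw [hP, oneKronT, Psupp_transpose]
    have hcomm : M * G = G * M := by
      conv_lhs => rw [← hGt, ← hMt, ← Matrix.transpose_mul]
      exact hg4
    have e : G * M * G = G * G * M := by
      rw [Matrix.mul_assoc, hcomm, ← Matrix.mul_assoc]
    have hGP : G * P = G := by
      calc G * P = (G * M * G) * P := by rw [hg2]
        _ = (G * G) * (M * P) := by rw [e, Matrix.mul_assoc]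
        _ = G * G * M := by rw [hMP]
        _ = G * M * G := e.symm
        _ = G := hg2
    have hPG : P * G = G := by
      rw [← hGt, ← hPt, ← Matrix.transpose_mul, hGP, hGt]
    have hXP : ((1 : Matrix (Fin T) (Fin T) ℝ) ⊗ₖ X) * P = A := oneKronX_mul_P X Bhat
    have h1X : ((1 : Matrix (Fin T) (Fin T) ℝ) ⊗ₖ Xᵀ)
        = ((1 : Matrix (Fin T) (Fin T) ℝ) ⊗ₖ X)ᵀ := (oneKronT X).symm
    have hPXt : P * ((1 : Matrix (Fin T) (Fin T) ℝ) ⊗ₖ Xᵀ) = Aᵀ := by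
      rw [h1X]
      conv_lhs => rw [← hPt, ← Matrix.transpose_mul, hXP]
    have hl : ((1 : Matrix (Fin T) (Fin T) ℝ) ⊗ₖ X) * G = A * G := by
      conv_lhs => rw [← hPG, ← Matrix.mul_assoc, hXP]
    have hN : ((1 : Matrix (Fin T) (Fin T) ℝ) ⊗ₖ X) * pinv M
          * ((1 : Matrix (Fin T) (Fin T) ℝ) ⊗ₖ Xᵀ)
        = A * G * Aᵀ := by
      rw [hGdef, hl]
      calc (A * G) * ((1 : Matrix (Fin T) (Fin T) ℝ) ⊗ₖ Xᵀ)
          = A * (G * (P * ((1 : Matrix (Fin T) (Fin T) ℝ) ⊗ₖ Xᵀ))) := by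
            conv_lhs => rw [Matrix.mul_assoc, ← hGP, Matrix.mul_assoc]
        _ = A * (G * Aᵀ) := by rw [hPXt]
        _ = A * G * Aᵀ := by rw [Matrix.mul_assoc]
    have hAtA : Aᵀ * A
        = (1 : Matrix (Fin T) (Fin T) ℝ) ⊗ₖ ((Xsupp X Bhat)ᵀ * Xsupp X Bhat) := by
      rw [hA, oneKronT, ← Matrix.mul_kronecker_mul, Matrix.one_mul]
    have hquad : ∀ u : Fin T × Fin p → ℝ, u ⬝ᵥ ((Aᵀ * A) *ᵥ u) ≤ u ⬝ᵥ (M *ᵥ u) := by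
      intro u
      rw [hAtA]
      exact Mmat_quad_ge lam tau X Bhat hlam htau u
    have hkey : ∀ v : Fin T × Fin n → ℝ,
        ((A * G * Aᵀ) *ᵥ v) ⬝ᵥ ((A * G * Aᵀ) *ᵥ v) ≤ v ⬝ᵥ ((A * G * Aᵀ) *ᵥ v) := by
      intro v
      set y := Aᵀ *ᵥ v with hy
      set u := G *ᵥ y with hu
      have hNv : (A * G * Aᵀ) *ᵥ v = A *ᵥ u := by
        rw [hu, hy, Matrix.mulVec_mulVec, Matrix.mulVec_mulVec]
      rw [hNv]
      have step1 : (A *ᵥ u) ⬝ᵥ (A *ᵥ u) ≤ u ⬝ᵥ (M *ᵥ u) := by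
        rw [← quadTransposeMul]
        exact hquad u
      have step2 : u ⬝ᵥ (M *ᵥ u) = y ⬝ᵥ u := by
        rw [hu, dpJuggle, hGt, Matrix.mulVec_mulVec, Matrix.mulVec_mulVec, hg2]
      have step3 : y ⬝ᵥ u = v ⬝ᵥ (A *ᵥ u) := by
        rw [hy, dpJuggle, Matrix.transpose_transpose]
      linarith
    have hnorm : ∀ v : Fin T × Fin n → ℝ,
        Real.sqrt (((A * G * Aᵀ) *ᵥ v) ⬝ᵥ ((A * G * Aᵀ) *ᵥ v))
          ≤ Real.sqrt (v ⬝ᵥ v) := by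
      intro v
      have ha := dpSelfNonneg ((A * G * Aᵀ) *ᵥ v)
      have hb := dpSelfNonneg v
      have h1 := hkey v
      have hcs : (v ⬝ᵥ ((A * G * Aᵀ) *ᵥ v)) ^ 2
          ≤ (v ⬝ᵥ v) * (((A * G * Aᵀ) *ᵥ v) ⬝ᵥ ((A * G * Aᵀ) *ᵥ v)) := by
        have h := Finset.sum_mul_sq_le_sq_mul_sq Finset.univ v ((A * G * Aᵀ) *ᵥ v)
        have e1 : v ⬝ᵥ v = ∑ i, v i ^ 2 := by simp [dotProduct, sq]
        have e2 : ((A * G * Aᵀ) *ᵥ v) ⬝ᵥ ((A * G * Aᵀ) *ᵥ v)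
            = ∑ i, ((A * G * Aᵀ) *ᵥ v) i ^ 2 := by simp [dotProduct, sq]
        rw [e1, e2]
        exact h
      have hab : ((A * G * Aᵀ) *ᵥ v) ⬝ᵥ ((A * G * Aᵀ) *ᵥ v) ≤ v ⬝ᵥ v := by
        nlinarith [h1, hcs, ha, hb]
      exact Real.sqrt_le_sqrt hab
    rw [hN]
    unfold opNorm
    refine ContinuousLinearMap.opNorm_le_bound _ zero_le_one fun x => ?_
    rw [one_mul]
    have hnorm_eq : ∀ w : Fin T × Fin n → ℝ,
        ‖(WithLp.equiv 2 (Fin T × Fin n → ℝ)).symm w‖ = Real.sqrt (w ⬝ᵥ w) := by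
      intro w
      rw [EuclideanSpace.norm_eq]
      have hterm : ∀ i : Fin T × Fin n,
          ‖(WithLp.equiv 2 (Fin T × Fin n → ℝ)).symm w i‖ ^ 2 = w i * w i := by
        intro i
        rw [show (WithLp.equiv 2 (Fin T × Fin n → ℝ)).symm w i = w i from rfl,
          Real.norm_eq_abs, sq_abs, sq]
      rw [Finset.sum_congr rfl fun i _ => hterm i]
      rfl
    have happ : (LinearMap.toContinuousLinearMap (Matrix.toEuclideanLin (A * G * Aᵀ))) x
        = (Matrix.toEuclideanLin (A * G * Aᵀ)) x := rfl
    have hx : ‖x‖ = Real.sqrt ((WithLp.equiv 2 (Fin T × Fin n → ℝ)) x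
        ⬝ᵥ (WithLp.equiv 2 (Fin T × Fin n → ℝ)) x) := by
      conv_lhs => rw [← (WithLp.equiv 2 (Fin T × Fin n → ℝ)).symm_apply_apply x]
      rw [hnorm_eq]
    rw [happ, Matrix.toEuclideanLin_apply, hx]
    exact (hnorm_eq ((A * G * Aᵀ) *ᵥ (WithLp.equiv 2 (Fin T × Fin n → ℝ)) x)).trans_le (hnorm _)
  · have h0 : pinv M = 0 := by
      unfold pinv
      rw [dif_neg hex]
    rw [h0, Matrix.mul_zero, Matrix.zero_mul]
    have hz : opNorm (0 : Matrix (Fin T × Fin n) (Fin T × Fin n) ℝ) = 0 := by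
      unfold opNorm
      rw [map_zero, map_zero, norm_zero]
    rw [hz]
    exact zero_le_one

end MTS
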